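/- Let m ∈ ℕ and let Y be a Banach space having cotype q with 2 ≤ q < ∞. Then for all Banach spaces X₁,…,X_m, every continuous m-linear mapping T : X₁ × ⋯ × X_m → Y is absolutely (q;1)-summing, i.e., ∑_j ‖T(x_j^{(1)},…,x_j^{(m)})‖^q < ∞ whenever (x_j^{(k)})_j is weakly 1-summable in X_k for each k. -/

import Mathlib

open scoped BigOperators

/-- A sequence in a normed space is *weakly 1-summable*. -/
def WeaklySummable (𝕂 : Type*) [RCLike 𝕂] {X : Type*} [NormedAddCommGroup X]
    [NormedSpace 𝕂 X] (x : ℕ → X) : Prop :=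
  ∀ φ : X →L[𝕂] 𝕂, Summable fun j => ‖φ (x j)‖

/-- A normed space has cotype `q` (Rademacher averages written as an average over signs). -/
def HasCotype (X : Type*) [NormedAddCommGroup X] (q : ℝ) : Prop :=
  ∃ C : ℝ, 0 ≤ C ∧ ∀ (k : ℕ) (x : Fin k → X),
    (∑ j, ‖x j‖ ^ q) ^ (1 / q) ≤
      C * Real.sqrt ((2 ^ k : ℝ)⁻¹ *
        ∑ ε : Fin k → Bool, ‖∑ j, (if ε j then x j else -x j)‖ ^ 2)


section Aux

variable {𝕂 : Type*} [RCLike 𝕂]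

/-- ±1 sign attached to a boolean. -/
def bsign (𝕂 : Type*) [RCLike 𝕂] (b : Bool) : 𝕂 := if b then 1 else -1

lemma norm_bsign (b : Bool) : ‖(bsign 𝕂 b)‖ = 1 := by
  cases b <;> simp [bsign]

lemma bsign_mul_self (b : Bool) : (bsign 𝕂 b) * bsign 𝕂 b = 1 := by
  cases b <;> simp [bsign]

lemma bsign_not (b : Bool) : (bsign 𝕂 (!b)) = - bsign 𝕂 b := by
  cases b <;> simp [bsign]

lemma sum_bsign_mul {α : Type*} [Fintype α] [DecidableEq α] (a b : α) :
    ∑ ε : α → Bool, (bsign 𝕂 (ε a) * bsign 𝕂 (ε b)) =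
      if a = b then ((2 : 𝕂) ^ Fintype.card α) else 0 := by
  rcases eq_or_ne a b with rfl | hab
  · simp only [if_pos rfl]
    rw [Finset.sum_congr rfl (fun ε _ => bsign_mul_self (ε a))]
    simp [Finset.card_univ, Fintype.card_fun]
  · rw [if_neg hab]
    set f : (α → Bool) → 𝕂 := fun ε => bsign 𝕂 (ε a) * bsign 𝕂 (ε b) with hf
    have hinv : Function.Involutive (fun ε : α → Bool => Function.update ε a (!(ε a))) := by
      intro ε
      funext t
      rcases eq_or_ne t a with rfl | ht
      · simp
      · simp [Function.update_of_ne ht]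
    have hneg : ∀ ε : α → Bool, f ((fun ε : α → Bool => Function.update ε a (!(ε a))) ε) = - f ε := by
      intro ε
      simp only [hf, Function.update_self, Function.update_of_ne (Ne.symm hab), bsign_not]
      ring
    have hsum : ∑ ε : α → Bool, f ε = ∑ ε : α → Bool, f ((hinv.toPerm _) ε) :=
      (Equiv.sum_comp (hinv.toPerm _) f).symm
    have : ∑ ε : α → Bool, f ε = - ∑ ε : α → Bool, f ε := by
      calc ∑ ε : α → Bool, f ε
          = ∑ ε : α → Bool, f ((hinv.toPerm _) ε) := hsum
        _ = ∑ ε : α → Bool, - f ε := by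
            refine Finset.sum_congr rfl fun ε _ => ?_
            simpa using hneg ε
        _ = - ∑ ε : α → Bool, f ε := by rw [Finset.sum_neg_distrib]
    have h2 : (∑ ε : α → Bool, f ε) + (∑ ε : α → Bool, f ε) = 0 := by
      nth_rewrite 1 [this]; exact neg_add_cancel _
    exact add_self_eq_zero.mp h2

lemma weakly_summable_bound {X : Type*} [NormedAddCommGroup X] [NormedSpace 𝕂 X]
    (x : ℕ → X) (hx : WeaklySummable 𝕂 x) :
    ∃ M : ℝ, 0 ≤ M ∧ ∀ (F : Finset ℕ) (c : ℕ → 𝕂), (∀ j, ‖c j‖ ≤ 1) →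
      ‖∑ j ∈ F, c j • x j‖ ≤ M := by
  classical
  set ι := Finset ℕ × {c : ℕ → 𝕂 // ∀ j, ‖c j‖ ≤ 1} with hι
  set z : ι → X := fun p => ∑ j ∈ p.1, p.2.1 j • x j with hz
  set g : ι → (X →L[𝕂] 𝕂) →L[𝕂] 𝕂 :=
    fun p => NormedSpace.inclusionInDoubleDual 𝕂 X (z p) with hg
  have hpt : ∀ φ : X →L[𝕂] 𝕂, ∃ C, ∀ p : ι, ‖g p φ‖ ≤ C := by
    intro φ
    refine ⟨∑' j, ‖φ (x j)‖, fun p => ?_⟩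
    have h1 : g p φ = ∑ j ∈ p.1, p.2.1 j * φ (x j) := by
      simp [hg, hz, NormedSpace.dual_def, map_sum, smul_eq_mul]
    rw [h1]
    calc ‖∑ j ∈ p.1, p.2.1 j * φ (x j)‖ ≤ ∑ j ∈ p.1, ‖p.2.1 j * φ (x j)‖ :=
          norm_sum_le _ _
      _ ≤ ∑ j ∈ p.1, ‖φ (x j)‖ := by
          refine Finset.sum_le_sum fun j _ => ?_
          rw [norm_mul]
          exact mul_le_of_le_one_left (norm_nonneg _) (p.2.2 j)
      _ ≤ ∑' j, ‖φ (x j)‖ :=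
          Summable.sum_le_tsum _ (fun j _ => norm_nonneg _) (hx φ)
  obtain ⟨C', hC'⟩ := banach_steinhaus hpt
  refine ⟨max C' 0, le_max_right _ _, fun F c hc => ?_⟩
  have h2 : ‖g (⟨F, ⟨c, hc⟩⟩ : ι)‖ = ‖∑ j ∈ F, c j • x j‖ := by
    have := (NormedSpace.inclusionInDoubleDualLi (𝕜 := 𝕂) (E := X)).norm_map
      (∑ j ∈ F, c j • x j)
    simpa [hg, hz, NormedSpace.inclusionInDoubleDualLi] using this
  calc ‖∑ j ∈ F, c j • x j‖ = ‖g (⟨F, ⟨c, hc⟩⟩ : ι)‖ := h2.symm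
    _ ≤ C' := hC' _
    _ ≤ max C' 0 := le_max_left _ _

end Aux

section Key

universe u v

lemma key_bound (𝕂 : Type*) [RCLike 𝕂] (Y : Type v) [NormedAddCommGroup Y]
    [NormedSpace 𝕂 Y] (n : ℕ) :
    ∀ (X : Fin (n + 1) → Type u) [∀ k, NormedAddCommGroup (X k)]
      [∀ k, NormedSpace 𝕂 (X k)]
      (T : ContinuousMultilinearMap 𝕂 X Y) (x : ∀ k, ℕ → X k) (M : Fin (n + 1) → ℝ),
      (∀ (k : Fin (n + 1)) (F : Finset ℕ) (c : ℕ → 𝕂), (∀ j, ‖c j‖ ≤ 1) →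
        ‖∑ j ∈ F, c j • x k j‖ ≤ M k) →
      ∀ (F : Finset ℕ) (c : ℕ → 𝕂), (∀ j, ‖c j‖ ≤ 1) →
      ‖∑ j ∈ F, c j • T (fun k => x k j)‖ ≤ ‖T‖ * ∏ k, M k := by
  induction n with
  | zero =>
    intro X _ _ T x M hM F c hc
    set e : ∀ i : Fin 0, X i.succ := fun i => i.elim0 with he
    have h0 : ∀ j, T (fun k => x k j) = T.curryLeft (x 0 j) e := by
      intro j
      rw [ContinuousMultilinearMap.curryLeft_apply]
      congr 1
      funext k
      have hk : k = 0 := Fin.eq_zero k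
      subst hk
      simp
    have h1 : ∑ j ∈ F, c j • T (fun k => x k j)
        = T.curryLeft (∑ j ∈ F, c j • x 0 j) e := by
      rw [map_sum, ContinuousMultilinearMap.sum_apply]
      refine Finset.sum_congr rfl fun j _ => ?_
      rw [h0 j, map_smul, ContinuousMultilinearMap.smul_apply]
    rw [h1]
    calc ‖T.curryLeft (∑ j ∈ F, c j • x 0 j) e‖
        ≤ ‖T.curryLeft (∑ j ∈ F, c j • x 0 j)‖ * ∏ i : Fin 0, ‖e i‖ :=
          ContinuousMultilinearMap.le_opNorm _ _
      _ = ‖T.curryLeft (∑ j ∈ F, c j • x 0 j)‖ := by simp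
      _ ≤ ‖T.curryLeft‖ * ‖∑ j ∈ F, c j • x 0 j‖ := ContinuousLinearMap.le_opNorm _ _
      _ = ‖T‖ * ‖∑ j ∈ F, c j • x 0 j‖ := by rw [ContinuousMultilinearMap.curryLeft_norm]
      _ ≤ ‖T‖ * M 0 := mul_le_mul_of_nonneg_left (hM 0 F c hc) (norm_nonneg _)
      _ = ‖T‖ * ∏ k, M k := by rw [Fin.prod_univ_one]
  | succ n ih =>
    intro X _ _ T x M hM F c hc
    classical
    set G := T.curryLeft with hG
    set x' : ∀ i : Fin (n + 1), ℕ → X i.succ := fun i j => x i.succ j with hx'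
    set M' : Fin (n + 1) → ℝ := fun i => M i.succ with hM'def
    have hM' : ∀ (k : Fin (n + 1)) (F : Finset ℕ) (c : ℕ → 𝕂), (∀ j, ‖c j‖ ≤ 1) →
        ‖∑ j ∈ F, c j • x' k j‖ ≤ M' k := fun k => hM k.succ
    set d : (↥F → Bool) → ℕ → 𝕂 :=
      fun ε j => if h : j ∈ F then bsign 𝕂 (ε ⟨j, h⟩) else 1 with hd
    have hdnorm : ∀ ε j, ‖d ε j‖ = 1 := by
      intro ε j
      by_cases h : j ∈ F
      · simp [hd, h, norm_bsign]
      · simp [hd, h]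
    set u : (↥F → Bool) → X 0 := fun ε => ∑ j ∈ F, d ε j • x 0 j with hu
    have hunorm : ∀ ε, ‖u ε‖ ≤ M 0 := fun ε => hM 0 F (d ε) (fun j => le_of_eq (hdnorm ε j))
    set S : (↥F → Bool) → Y :=
      fun ε => ∑ j ∈ F, (d ε j * c j) • (G (u ε)) (fun i => x' i j) with hS
    set w : ℕ → ℕ → Y := fun i j => T (Fin.cons (x 0 i) (fun t => x' t j)) with hw
    have cons_eq : ∀ j, (Fin.cons (x 0 j) (fun i => x' i j) : ∀ k, X k) = fun k => x k j := by
      intro j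
      funext k
      refine Fin.cases ?_ (fun i => ?_) k
      · simp
      · simp [hx']
    have expand : ∀ ε, S ε = ∑ j ∈ F, ∑ i ∈ F,
        ((d ε j * c j) * d ε i) • w i j := by
      intro ε
      refine Finset.sum_congr rfl fun j _ => ?_
      have h1 : (G (u ε)) (fun i => x' i j) = T (Fin.cons (u ε) (fun i => x' i j)) :=
        ContinuousMultilinearMap.curryLeft_apply _ _ _
      have h2 : (Fin.cons (u ε) (fun i => x' i j) : ∀ k, X k)
          = Function.update (Fin.cons (x 0 j) (fun i => x' i j)) 0 (u ε) := by
        rw [Fin.update_cons_zero]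
      have h3 : T (Function.update (Fin.cons (x 0 j) (fun i => x' i j)) 0 (u ε))
          = ∑ i ∈ F, d ε i • T (Function.update (Fin.cons (x 0 j) (fun t => x' t j)) 0 (x 0 i)) := by
        simp only [hu]
        have h3' := T.toMultilinearMap.map_update_sum F 0 (fun i => d ε i • x 0 i)
          (Fin.cons (x 0 j) fun i => x' i j)
        simp only [ContinuousMultilinearMap.coe_coe] at h3'
        rw [h3']
        refine Finset.sum_congr rfl fun i _ => ?_
        exact T.map_update_smul _ 0 (d ε i) (x 0 i)
      rw [h1, h2, h3, Finset.smul_sum]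
      refine Finset.sum_congr rfl fun i _ => ?_
      rw [smul_smul, Fin.update_cons_zero]
    have orth : ∀ i ∈ F, ∀ j ∈ F, ∑ ε : ↥F → Bool, d ε j * d ε i
        = if j = i then (2 : 𝕂) ^ F.card else 0 := by
      intro i hi j hj
      have hterm : ∀ ε : ↥F → Bool, d ε j * d ε i
          = bsign 𝕂 (ε ⟨j, hj⟩) * bsign 𝕂 (ε ⟨i, hi⟩) := by
        intro ε
        simp only [hd, dif_pos hi, dif_pos hj]
      rw [Finset.sum_congr rfl (fun ε _ => hterm ε), sum_bsign_mul]
      have hcard : Fintype.card ↥F = F.card := Fintype.card_coe F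
      by_cases h : j = i
      · subst h
        simp [hcard]
      · have hne : (⟨j, hj⟩ : ↥F) ≠ ⟨i, hi⟩ := fun hcon =>
          h (congrArg Subtype.val hcon)
        simp [h, hne]
    have hsum : ∑ ε : ↥F → Bool, S ε
        = (2 : 𝕂) ^ F.card • ∑ j ∈ F, c j • T (fun k => x k j) := by
      rw [Finset.sum_congr rfl (fun ε _ => expand ε)]
      rw [Finset.sum_comm]
      have hj : ∀ j ∈ F, ∑ ε : ↥F → Bool, ∑ i ∈ F, ((d ε j * c j) * d ε i) • w i j
          = (2 : 𝕂) ^ F.card • (c j • T (fun k => x k j)) := by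
        intro j hjF
        rw [Finset.sum_comm]
        have hi : ∀ i ∈ F, ∑ ε : ↥F → Bool, ((d ε j * c j) * d ε i) • w i j
            = (if j = i then (2 : 𝕂) ^ F.card else 0) • (c j • w i j) := by
          intro i hiF
          rw [← orth i hiF j hjF, Finset.sum_smul]
          refine Finset.sum_congr rfl fun ε _ => ?_
          rw [smul_smul]
          ring_nf
        rw [Finset.sum_congr rfl hi]
        rw [Finset.sum_eq_single j]
        · rw [if_pos rfl]
          congr 2
          simp only [hw]
          rw [cons_eq j]
        · intro i hiF hne
          rw [if_neg (fun h => hne h.symm), zero_smul]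
        · intro h
          exact absurd hjF h
      rw [Finset.sum_congr rfl hj, Finset.smul_sum]
    have h2ne : ((2 : 𝕂) ^ F.card) ≠ 0 := pow_ne_zero _ two_ne_zero
    have identity : ∑ j ∈ F, c j • T (fun k => x k j)
        = ((2 : 𝕂) ^ F.card)⁻¹ • ∑ ε : ↥F → Bool, S ε := by
      rw [hsum, inv_smul_smul₀ h2ne]
    -- nonnegativity of the product
    have hMnn : ∀ k : Fin (n + 1), 0 ≤ M' k := by
      intro k
      simpa using hM' k ∅ (fun _ => 1) (fun _ => by simp)
    have hP : 0 ≤ ∏ i, M' i := Finset.prod_nonneg fun i _ => hMnn i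
    have hSb : ∀ ε, ‖S ε‖ ≤ ‖T‖ * M 0 * ∏ i, M' i := by
      intro ε
      have hc' : ∀ j, ‖d ε j * c j‖ ≤ 1 := by
        intro j
        rw [norm_mul, hdnorm, one_mul]
        exact hc j
      have hIH := ih (fun i => X i.succ) (G (u ε)) x' M' hM' F (fun j => d ε j * c j) hc'
      refine le_trans hIH ?_
      have h4 : ‖G (u ε)‖ ≤ ‖T‖ * M 0 := by
        calc ‖G (u ε)‖ ≤ ‖G‖ * ‖u ε‖ := ContinuousLinearMap.le_opNorm _ _
          _ = ‖T‖ * ‖u ε‖ := by rw [hG, ContinuousMultilinearMap.curryLeft_norm]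
          _ ≤ ‖T‖ * M 0 := mul_le_mul_of_nonneg_left (hunorm ε) (norm_nonneg _)
      exact mul_le_mul_of_nonneg_right h4 hP
    have hcard : (Finset.univ : Finset (↥F → Bool)).card = 2 ^ F.card := by
      simp [Finset.card_univ, Fintype.card_fun, Fintype.card_coe]
    have hnormsum : ‖∑ ε : ↥F → Bool, S ε‖ ≤ (2 : ℝ) ^ F.card * (‖T‖ * M 0 * ∏ i, M' i) := by
      calc ‖∑ ε : ↥F → Bool, S ε‖ ≤ ∑ ε : ↥F → Bool, ‖S ε‖ := norm_sum_le _ _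
        _ ≤ (Finset.univ : Finset (↥F → Bool)).card • (‖T‖ * M 0 * ∏ i, M' i) :=
            Finset.sum_le_card_nsmul _ _ _ (fun ε _ => hSb ε)
        _ = (2 : ℝ) ^ F.card * (‖T‖ * M 0 * ∏ i, M' i) := by
            rw [hcard, nsmul_eq_mul]
            push_cast
            ring
    rw [identity, norm_smul]
    have hn2 : ‖((2 : 𝕂) ^ F.card)⁻¹‖ = ((2 : ℝ) ^ F.card)⁻¹ := by
      rw [norm_inv, norm_pow, RCLike.norm_ofNat]
    rw [hn2]
    calc ((2 : ℝ) ^ F.card)⁻¹ * ‖∑ ε : ↥F → Bool, S ε‖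
        ≤ ((2 : ℝ) ^ F.card)⁻¹ * ((2 : ℝ) ^ F.card * (‖T‖ * M 0 * ∏ i, M' i)) := by
          refine mul_le_mul_of_nonneg_left hnormsum (by positivity)
      _ = ‖T‖ * M 0 * ∏ i, M' i := by
          rw [← mul_assoc, inv_mul_cancel₀ (by positivity), one_mul]
      _ = ‖T‖ * ∏ k, M k := by
          rw [show (∏ k, M k) = M 0 * ∏ i : Fin (n + 1), M' i from Fin.prod_univ_succ M]
          ring

end Key

/-- If `Y` has cotype `q`, then every continuous `m`-linear mapping into `Y` is absolutely
`(q;1)`-summing. -/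
theorem stmt8 (𝕂 : Type*) [RCLike 𝕂] (m : ℕ) (hm : 0 < m)
    (Y : Type*) [NormedAddCommGroup Y] [NormedSpace 𝕂 Y] [CompleteSpace Y]
    (q : ℝ) (hq2 : 2 ≤ q) (hcot : HasCotype Y q)
    (X : Fin m → Type*) [∀ k, NormedAddCommGroup (X k)]
    [∀ k, NormedSpace 𝕂 (X k)] [∀ k, CompleteSpace (X k)]
    (T : ContinuousMultilinearMap 𝕂 X Y)
    (x : ∀ k, ℕ → X k) (hx : ∀ k, WeaklySummable 𝕂 (x k)) :
    Summable fun j => ‖T fun k => x k j‖ ^ q := by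
  classical
  obtain ⟨n, rfl⟩ : ∃ n, m = n + 1 := ⟨m - 1, (Nat.succ_pred_eq_of_pos hm).symm⟩
  obtain ⟨C, hC0, hCot⟩ := hcot
  choose M hM0 hM using fun k => weakly_summable_bound (x k) (hx k)
  set y : ℕ → Y := fun j => T (fun k => x k j) with hy
  have hkey : ∀ (F : Finset ℕ) (c : ℕ → 𝕂), (∀ j, ‖c j‖ ≤ 1) →
      ‖∑ j ∈ F, c j • y j‖ ≤ ‖T‖ * ∏ k, M k :=
    key_bound 𝕂 Y n X T x M hM
  set D := ‖T‖ * ∏ k, M k with hD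
  have hD0 : 0 ≤ D := mul_nonneg (norm_nonneg _) (Finset.prod_nonneg fun k _ => hM0 k)
  have hsign : ∀ (N : ℕ) (ε : Fin N → Bool),
      ‖∑ i : Fin N, (if ε i then y i else - y i)‖ ≤ D := by
    intro N ε
    set c : ℕ → 𝕂 := fun j => if h : j < N then bsign 𝕂 (ε ⟨j, h⟩) else 1 with hcdef
    have hc : ∀ j, ‖c j‖ ≤ 1 := by
      intro j; by_cases h : j < N
      · simp [hcdef, h, norm_bsign]
      · simp [hcdef, h]
    have heq : ∑ i : Fin N, (if ε i then y i else - y i)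
        = ∑ j ∈ Finset.range N, c j • y j := by
      rw [← Fin.sum_univ_eq_sum_range (fun j => c j • y j) N]
      refine Finset.sum_congr rfl fun i _ => ?_
      have hci : c i = bsign 𝕂 (ε i) := by simp [hcdef, i.isLt, Fin.eta]
      rw [hci]
      cases h : ε i <;> simp [bsign, h]
    rw [heq]
    exact hkey (Finset.range N) c hc
  have hq0 : (0 : ℝ) < q := lt_of_lt_of_le two_pos hq2
  have main : ∀ N : ℕ, ∑ j ∈ Finset.range N, ‖y j‖ ^ q ≤ (C * D) ^ q := by
    intro N
    have hcot' := hCot N (fun i => y i)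
    have hcard : (Finset.univ : Finset (Fin N → Bool)).card = 2 ^ N := by
      simp [Finset.card_univ, Fintype.card_fun]
    have hsq : ((2 : ℝ) ^ N)⁻¹ *
        ∑ ε : Fin N → Bool, ‖∑ i, (if ε i then y i else - y i)‖ ^ 2 ≤ D ^ 2 := by
      have hb : ∀ ε : Fin N → Bool, ‖∑ i, (if ε i then y i else - y i)‖ ^ 2 ≤ D ^ 2 :=
        fun ε => pow_le_pow_left₀ (norm_nonneg _) (hsign N ε) 2
      calc ((2 : ℝ) ^ N)⁻¹ *
            ∑ ε : Fin N → Bool, ‖∑ i, (if ε i then y i else - y i)‖ ^ 2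
          ≤ ((2 : ℝ) ^ N)⁻¹ * ((2 : ℝ) ^ N * D ^ 2) := by
            refine mul_le_mul_of_nonneg_left ?_ (by positivity)
            calc ∑ ε : Fin N → Bool, ‖∑ i, (if ε i then y i else - y i)‖ ^ 2
                ≤ (Finset.univ : Finset (Fin N → Bool)).card • D ^ 2 :=
                  Finset.sum_le_card_nsmul _ _ _ (fun ε _ => hb ε)
              _ = (2 : ℝ) ^ N * D ^ 2 := by rw [hcard, nsmul_eq_mul]; push_cast; ring
        _ = D ^ 2 := by rw [← mul_assoc, inv_mul_cancel₀ (by positivity), one_mul]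
    have h1 : (∑ j : Fin N, ‖y j‖ ^ q) ^ (1 / q) ≤ C * D := by
      refine le_trans hcot' ?_
      have hs : Real.sqrt (((2 : ℝ) ^ N)⁻¹ *
          ∑ ε : Fin N → Bool, ‖∑ i, (if ε i then y i else - y i)‖ ^ 2) ≤ D := by
        calc Real.sqrt _ ≤ Real.sqrt (D ^ 2) := Real.sqrt_le_sqrt hsq
          _ = D := Real.sqrt_sq hD0
      exact mul_le_mul_of_nonneg_left hs hC0
    have hsum0 : 0 ≤ ∑ j : Fin N, ‖y j‖ ^ q :=
      Finset.sum_nonneg fun j _ => Real.rpow_nonneg (norm_nonneg _) q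
    have h2 := Real.rpow_le_rpow (Real.rpow_nonneg hsum0 _) h1 (le_of_lt hq0)
    rw [← Real.rpow_mul hsum0, one_div_mul_cancel (ne_of_gt hq0), Real.rpow_one] at h2
    rwa [Fin.sum_univ_eq_sum_range (fun j => ‖y j‖ ^ q) N] at h2
  exact summable_of_sum_range_le (fun j => Real.rpow_nonneg (norm_nonneg _) q) main
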